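/- Let q be a prime power, d ≥ 1 and ℓ ≥ 1 integers, and let A_1, A_2, ..., A_ℓ and A be subsets of 𝔽_q^d, with each A_j nonempty. Then ∑_{(x_1,...,x_ℓ) ∈ A_1 × ··· × A_ℓ} ∑_{(t_1,...,t_ℓ) ∈ 𝔽_q^ℓ} (Π^A_{x_1,...,x_ℓ}(t_1,...,t_ℓ))^2 ≤ (|A|^2 · ∏_{i=1}^ℓ |A_i|) / q^ℓ + q^d · |A| · (∏_{i=1}^ℓ |A_i|) · (∑_{j=1}^ℓ 1/|A_j|). -/

import Mathlib

/-- The dot product on `𝔽_q^d`. -/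
def dotp {F : Type} [Field F] {d : ℕ} (x y : Fin d → F) : F := ∑ i, x i * y i

open Finset

section aux

variable {F : Type} [Field F] [Fintype F] [DecidableEq F]

lemma addchar_sum {ι : Type} (ψ : AddChar F ℂ) (s : Finset ι) (f : ι → F) :
    ψ (∑ i ∈ s, f i) = ∏ i ∈ s, ψ (f i) := by
  induction s using Finset.cons_induction with
  | empty => simp
  | cons a s ha ih => simp [Finset.sum_cons, Finset.prod_cons, AddChar.map_add_eq_mul, ih]

/-- Orthogonality over `F^n`. -/
lemma orth_pi {ψ : AddChar F ℂ} (hψ : ψ.IsPrimitive) (n : ℕ) (w : Fin n → F) :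
    ∑ u : Fin n → F, ψ (∑ i, u i * w i) =
      if w = 0 then ((Fintype.card F : ℂ)) ^ n else 0 := by
  have h1 : ∀ u : Fin n → F, ψ (∑ i, u i * w i) = ∏ i, ψ (u i * w i) := fun u =>
    addchar_sum ψ _ _
  simp_rw [h1]
  have hps := Finset.prod_univ_sum (κ := fun _ : Fin n => F)
    (t := fun _ : Fin n => (Finset.univ : Finset F)) (f := fun i c => ψ (c * w i))
  rw [Fintype.piFinset_univ] at hps
  rw [← hps]
  have h2 : ∀ i, ∑ c : F, ψ (c * w i)
      = ((if w i = 0 then (Fintype.card F : ℕ) else 0 : ℕ) : ℂ) :=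
    fun i => AddChar.sum_mulShift (w i) hψ
  simp_rw [h2]
  push_cast
  by_cases hw : w = 0
  · simp [hw]
  · rw [if_neg hw]
    obtain ⟨k, hk⟩ := Function.ne_iff.mp hw
    have hk' : w k ≠ 0 := by simpa using hk
    exact Finset.prod_eq_zero (Finset.mem_univ k) (by simp [hk'])

lemma conj_char {ψ : AddChar F ℂ} (c : F) : (starRingEnd ℂ) (ψ c) = ψ (-c) := by
  have h : (0 : ℕ) < ringChar F :=
    Nat.pos_of_ne_zero (CharP.ringChar_ne_zero_of_finite F)
  rw [AddChar.starComp_apply h, AddChar.inv_apply]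

lemma dotp_sub {d : ℕ} (a y z : Fin d → F) : dotp a (y - z) = dotp a y - dotp a z := by
  simp [dotp, mul_sub, Finset.sum_sub_distrib]

lemma dotp_zero_right {d : ℕ} (a : Fin d → F) : dotp a 0 = 0 := by simp [dotp]

lemma dotp_zero_left {d : ℕ} (a : Fin d → F) : dotp 0 a = 0 := by simp [dotp]

lemma dotp_sum_smul {d ℓ : ℕ} (s : Fin ℓ → F) (x : Fin ℓ → (Fin d → F)) (v : Fin d → F) :
    dotp (∑ i, s i • x i) v = ∑ i, s i * dotp (x i) v := by
  simp only [dotp, Finset.sum_apply, Pi.smul_apply, smul_eq_mul, Finset.mul_sum,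
    Finset.sum_mul]
  rw [Finset.sum_comm]
  exact Finset.sum_congr rfl fun i _ => Finset.sum_congr rfl fun k _ => by ring

end aux

set_option maxHeartbeats 2000000 in
theorem stmt5 (F : Type) [Field F] [Fintype F] [DecidableEq F] (d ℓ : ℕ)
    (hd : 1 ≤ d) (hℓ : 1 ≤ ℓ)
    (A : Fin ℓ → Finset (Fin d → F)) (hA : ∀ j, (A j).Nonempty)
    (B : Finset (Fin d → F)) :
    ∑ x ∈ Fintype.piFinset A, ∑ t : Fin ℓ → F,
        (((B.filter fun y => ∀ i, dotp (x i) y = t i).card : ℝ)) ^ 2 ≤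
      (B.card : ℝ) ^ 2 * (∏ i, ((A i).card : ℝ)) / (Fintype.card F : ℝ) ^ ℓ +
        (Fintype.card F : ℝ) ^ d * (B.card : ℝ) * (∏ i, ((A i).card : ℝ)) *
          ∑ j, 1 / ((A j).card : ℝ) := by
  classical
  obtain ⟨ψ, hψ⟩ : ∃ ψ : AddChar F ℂ, ψ.IsPrimitive :=
    ⟨_, AddChar.FiniteField.primitiveChar_to_Complex_isPrimitive F⟩
  set q : ℝ := (Fintype.card F : ℝ) with hq
  have hq1 : (1 : ℝ) ≤ q := by
    have : (1:ℕ) ≤ Fintype.card F := Fintype.card_pos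
    rw [hq]; exact_mod_cast this
  have hqpos : (0:ℝ) < q := lt_of_lt_of_le one_pos hq1
  -- the "Fourier transform" of B
  set S : (Fin d → F) → ℂ := fun u => ∑ y ∈ B, ψ (dotp u y) with hS
  set g : (Fin d → F) → ℝ := fun u => Complex.normSq (S u) with hg
  have hgnn : ∀ u, 0 ≤ g u := fun u => Complex.normSq_nonneg _
  -- double sum over B of character values is `normSq (S u)`
  have key3 : ∀ u : Fin d → F,
      ∑ y ∈ B, ∑ z ∈ B, ψ (dotp u (y - z)) = (g u : ℂ) := by
    intro u
    have : ∀ y z : Fin d → F, ψ (dotp u (y - z)) =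
        ψ (dotp u y) * (starRingEnd ℂ) (ψ (dotp u z)) := by
      intro y z
      rw [conj_char, ← AddChar.map_add_eq_mul, dotp_sub, sub_eq_add_neg]
    simp_rw [this, ← Finset.mul_sum, ← Finset.sum_mul, ← map_sum]
    exact Complex.mul_conj _
  -- Parseval
  have parseval : ∑ u : Fin d → F, g u = q ^ d * B.card := by
    have hc : ∑ u : Fin d → F, (g u : ℂ) = (q:ℂ) ^ d * B.card := by
      simp_rw [← key3]
      rw [Finset.sum_comm]
      have : ∀ y ∈ B, ∑ u : Fin d → F, ∑ z ∈ B, ψ (dotp u (y - z)) =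
          ((Fintype.card F : ℂ)) ^ d := by
        intro y hy
        rw [Finset.sum_comm]
        have : ∀ z : Fin d → F, ∑ u : Fin d → F, ψ (dotp u (y - z)) =
            if y - z = 0 then ((Fintype.card F : ℂ)) ^ d else 0 := by
          intro z
          have := orth_pi hψ d (y - z)
          simpa [dotp] using this
        simp_rw [this, sub_eq_zero]
        rw [Finset.sum_ite_eq]
        simp [hy]
      rw [Finset.sum_congr rfl this]
      simp [hq, mul_comm]
    exact_mod_cast hc
  -- per-x identity
  have key5 : ∀ x : Fin ℓ → (Fin d → F),
      ∑ t : Fin ℓ → F, (((B.filter fun y => ∀ i, dotp (x i) y = t i).card : ℝ)) ^ 2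
        = (q ^ ℓ)⁻¹ * ∑ s : Fin ℓ → F, g (∑ i, s i • x i) := by
    intro x
    -- step (a): combinatorial identity
    have stepa : ∑ t : Fin ℓ → F,
        (((B.filter fun y => ∀ i, dotp (x i) y = t i).card : ℝ)) ^ 2
        = ∑ y ∈ B, ∑ z ∈ B,
            (if (fun i => dotp (x i) (y - z)) = (0 : Fin ℓ → F) then (1:ℝ) else 0) := by
      have hcard : ∀ t : Fin ℓ → F,
          (((B.filter fun y => ∀ i, dotp (x i) y = t i).card : ℝ))
          = ∑ y ∈ B, (if (fun i => dotp (x i) y) = t then (1:ℝ) else 0) := by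
        intro t
        rw [Finset.card_filter]
        push_cast
        refine Finset.sum_congr rfl fun y _ => ?_
        congr 1
        simp [funext_iff]
      simp_rw [hcard, sq, Finset.sum_mul_sum]
      rw [Finset.sum_comm]
      refine Finset.sum_congr rfl fun y _ => ?_
      rw [Finset.sum_comm]
      refine Finset.sum_congr rfl fun z _ => ?_
      have : ∀ t : Fin ℓ → F,
          (if (fun i => dotp (x i) y) = t then (1:ℝ) else 0) *
            (if (fun i => dotp (x i) z) = t then (1:ℝ) else 0)
          = if (fun i => dotp (x i) y) = t then
              (if (fun i => dotp (x i) z) = t then (1:ℝ) else 0) else 0 := by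
        intro t; split_ifs <;> simp
      simp_rw [this]
      rw [Finset.sum_ite_eq]
      simp only [Finset.mem_univ, if_true]
      have hiff : ((fun i => dotp (x i) z) = (fun i => dotp (x i) y)) ↔
          ((fun i => dotp (x i) (y - z)) = (0 : Fin ℓ → F)) := by
        simp only [funext_iff, Pi.zero_apply, dotp_sub, sub_eq_zero]
        exact ⟨fun h i => (h i).symm, fun h i => (h i).symm⟩
      rw [if_congr hiff rfl rfl]
    -- step (b): character identity, in ℂ
    have stepb : ∀ y z : Fin d → F,
        ((if (fun i => dotp (x i) (y - z)) = (0 : Fin ℓ → F) then (1:ℝ) else 0 : ℝ) : ℂ)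
        = ((q:ℂ) ^ ℓ)⁻¹ * ∑ s : Fin ℓ → F, ψ (dotp (∑ i, s i • x i) (y - z)) := by
      intro y z
      have horth := orth_pi hψ ℓ (fun i => dotp (x i) (y - z))
      have : ∀ s : Fin ℓ → F, ψ (dotp (∑ i, s i • x i) (y - z))
          = ψ (∑ i, s i * dotp (x i) (y - z)) := by
        intro s; rw [dotp_sum_smul]
      simp_rw [this]
      rw [horth]
      have hqne : ((q:ℂ)) ^ ℓ ≠ 0 := by
        apply pow_ne_zero
        exact_mod_cast ne_of_gt hqpos
      split_ifs with h
      · rw [hq]; push_cast; field_simp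
      · simp
    -- combine
    have hcomb : ((∑ t : Fin ℓ → F,
        (((B.filter fun y => ∀ i, dotp (x i) y = t i).card : ℝ)) ^ 2 : ℝ) : ℂ)
        = ((q:ℂ) ^ ℓ)⁻¹ * ∑ s : Fin ℓ → F, (g (∑ i, s i • x i) : ℂ) := by
      rw [stepa]
      push_cast
      rw [Finset.sum_congr rfl (fun y _ => Finset.sum_congr rfl (fun z hz => stepb y z))]
      simp_rw [← Finset.mul_sum]
      congr 1
      have eq1 : (∑ y ∈ B, ∑ z ∈ B, ∑ s : Fin ℓ → F,
          ψ (dotp (∑ i, s i • x i) (y - z)))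
          = ∑ y ∈ B, ∑ s : Fin ℓ → F, ∑ z ∈ B,
            ψ (dotp (∑ i, s i • x i) (y - z)) :=
        Finset.sum_congr rfl fun y _ => Finset.sum_comm
      have eq2 : (∑ y ∈ B, ∑ s : Fin ℓ → F, ∑ z ∈ B,
          ψ (dotp (∑ i, s i • x i) (y - z)))
          = ∑ s : Fin ℓ → F, ∑ y ∈ B, ∑ z ∈ B,
            ψ (dotp (∑ i, s i • x i) (y - z)) := Finset.sum_comm
      rw [eq1, eq2]
      exact Finset.sum_congr rfl fun s _ => key3 _
    have hreal : ((∑ t : Fin ℓ → F,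
        (((B.filter fun y => ∀ i, dotp (x i) y = t i).card : ℝ)) ^ 2 : ℝ) : ℂ)
        = (((q ^ ℓ)⁻¹ * ∑ s : Fin ℓ → F, g (∑ i, s i • x i) : ℝ) : ℂ) := by
      rw [hcomb]; push_cast; ring
    exact_mod_cast hreal
  -- rewrite LHS
  rw [Finset.sum_congr rfl fun x _ => key5 x]
  rw [← Finset.mul_sum, Finset.sum_comm]
  -- split off s = 0
  have hsplit : ∑ s : Fin ℓ → F, ∑ x ∈ Fintype.piFinset A, g (∑ i, s i • x i)
      = (∑ x ∈ Fintype.piFinset A, g (∑ i, (0 : Fin ℓ → F) i • x i)) +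
        ∑ s ∈ (Finset.univ.erase (0 : Fin ℓ → F)),
          ∑ x ∈ Fintype.piFinset A, g (∑ i, s i • x i) := by
    rw [← Finset.add_sum_erase _ _ (Finset.mem_univ (0 : Fin ℓ → F))]
  -- main term
  have hmain : ∑ x ∈ Fintype.piFinset A, g (∑ i, (0 : Fin ℓ → F) i • x i)
      = (∏ i, ((A i).card : ℝ)) * (B.card : ℝ) ^ 2 := by
    have h0 : ∀ x : Fin ℓ → (Fin d → F), (∑ i, (0 : Fin ℓ → F) i • x i) = 0 := by
      intro x; simp
    have hg0 : g 0 = (B.card : ℝ) ^ 2 := by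
      have h1 : S 0 = (B.card : ℂ) := by
        rw [hS]; simp [dotp_zero_left]
      show Complex.normSq (S 0) = ((B.card : ℝ)) ^ 2
      rw [h1, Complex.normSq_natCast, sq]
    rw [Finset.sum_congr rfl fun x _ => by rw [h0 x, hg0]]
    rw [Finset.sum_const, Fintype.card_piFinset, nsmul_eq_mul, Nat.cast_prod]
  -- error bound per (j, s)
  have herr : ∀ (j : Fin ℓ) (s : Fin ℓ → F), s j ≠ 0 →
      ∑ x ∈ Fintype.piFinset A, g (∑ i, s i • x i)
        ≤ (∏ i ∈ Finset.univ.erase j, ((A i).card : ℝ)) * (q ^ d * B.card) := by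
    intro j s hsj
    set T : (Fin ℓ → (Fin d → F)) → (Fin d → F) := fun x => ∑ i, s i • x i with hT
    have hfib : ∑ x ∈ Fintype.piFinset A, g (T x)
        = ∑ u : Fin d → F, ∑ x ∈ (Fintype.piFinset A).filter (fun x => T x = u), g (T x) :=
      (Finset.sum_fiberwise _ _ _).symm
    rw [hfib]
    have hcard : ∀ u : Fin d → F,
        (((Fintype.piFinset A).filter (fun x => T x = u)).card : ℝ)
          ≤ ∏ i ∈ Finset.univ.erase j, ((A i).card : ℝ) := by
      intro u
      have hinj : (((Fintype.piFinset A).filter (fun x => T x = u)).card : ℕ)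
          ≤ (Fintype.piFinset (fun i => if i = j then ({0} : Finset (Fin d → F)) else A i)).card := by
        apply Finset.card_le_card_of_injOn (fun x i => if i = j then 0 else x i)
        · intro x hx
          rw [Finset.mem_coe, Finset.mem_filter] at hx
          rw [Finset.mem_coe, Fintype.mem_piFinset]
          intro i
          by_cases hij : i = j <;> simp [hij, Fintype.mem_piFinset.mp hx.1 i]
        · intro x hx x' hx' hxx'
          simp only [Finset.coe_filter, Set.mem_setOf_eq] at hx hx'
          have hoff : ∀ i, i ≠ j → x i = x' i := by
            intro i hij
            have := congrFun hxx' i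
            simpa [hij] using this
          have hsum : s j • x j = s j • x' j := by
            have h1 : T x = T x' := by rw [hx.2, hx'.2]
            rw [hT] at h1
            simp only at h1
            rw [← Finset.add_sum_erase _ _ (Finset.mem_univ j),
                ← Finset.add_sum_erase _ _ (Finset.mem_univ j)] at h1
            have h2 : ∑ i ∈ Finset.univ.erase j, s i • x i
                = ∑ i ∈ Finset.univ.erase j, s i • x' i := by
              refine Finset.sum_congr rfl fun i hi => ?_
              rw [hoff i (Finset.mem_erase.mp hi).1]
            rw [h2] at h1
            exact add_right_cancel h1
          have hj : x j = x' j := smul_right_injective (Fin d → F) hsj hsum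
          funext i
          by_cases hij : i = j
          · rw [hij, hj]
          · exact hoff i hij
      calc (((Fintype.piFinset A).filter (fun x => T x = u)).card : ℝ)
          ≤ ((Fintype.piFinset (fun i => if i = j then ({0} : Finset (Fin d → F)) else A i)).card : ℝ) := by
            exact_mod_cast hinj
        _ = ∏ i ∈ Finset.univ.erase j, ((A i).card : ℝ) := by
            rw [Fintype.card_piFinset, Nat.cast_prod,
              ← Finset.mul_prod_erase _ _ (Finset.mem_univ j), if_pos rfl]
            simp only [Finset.card_singleton, Nat.cast_one, one_mul]
            exact Finset.prod_congr rfl fun i hi => by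
              rw [if_neg (Finset.mem_erase.mp hi).1]
    calc ∑ u : Fin d → F, ∑ x ∈ (Fintype.piFinset A).filter (fun x => T x = u), g (T x)
        = ∑ u : Fin d → F, (((Fintype.piFinset A).filter (fun x => T x = u)).card : ℝ) * g u := by
          refine Finset.sum_congr rfl fun u _ => ?_
          have heq : ∑ x ∈ (Fintype.piFinset A).filter (fun x => T x = u), g (T x)
              = ∑ x ∈ (Fintype.piFinset A).filter (fun x => T x = u), g u :=
            Finset.sum_congr rfl fun x hx => by rw [(Finset.mem_filter.mp hx).2]
          rw [heq, Finset.sum_const, nsmul_eq_mul]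
      _ ≤ ∑ u : Fin d → F, (∏ i ∈ Finset.univ.erase j, ((A i).card : ℝ)) * g u := by
          refine Finset.sum_le_sum fun u _ => ?_
          exact mul_le_mul_of_nonneg_right (hcard u) (hgnn u)
      _ = (∏ i ∈ Finset.univ.erase j, ((A i).card : ℝ)) * (q ^ d * B.card) := by
          rw [← Finset.mul_sum, parseval]
  -- covering bound for the error sum
  have hcover : ∑ s ∈ (Finset.univ.erase (0 : Fin ℓ → F)),
      ∑ x ∈ Fintype.piFinset A, g (∑ i, s i • x i)
      ≤ ∑ j : Fin ℓ, (q ^ ℓ) * ((∏ i ∈ Finset.univ.erase j, ((A i).card : ℝ)) * (q ^ d * B.card)) := by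
    set h : (Fin ℓ → F) → ℝ := fun s => ∑ x ∈ Fintype.piFinset A, g (∑ i, s i • x i) with hh
    have hhnn : ∀ s, 0 ≤ h s := fun s => Finset.sum_nonneg fun x _ => hgnn _
    calc ∑ s ∈ (Finset.univ.erase (0 : Fin ℓ → F)), h s
        ≤ ∑ s ∈ (Finset.univ.erase (0 : Fin ℓ → F)), ∑ j : Fin ℓ,
            (if s j ≠ 0 then h s else 0) := by
          refine Finset.sum_le_sum fun s hs => ?_
          obtain ⟨j, hj⟩ := Function.ne_iff.mp (Finset.mem_erase.mp hs).1
          have : (if s j ≠ 0 then h s else 0) = h s := by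
            rw [if_pos]; simpa using hj
          calc h s = (if s j ≠ 0 then h s else 0) := this.symm
            _ ≤ ∑ j : Fin ℓ, (if s j ≠ 0 then h s else 0) := by
                refine Finset.single_le_sum (f := fun i => if s i ≠ 0 then h s else 0)
                  (fun i _ => ?_) (Finset.mem_univ j)
                split_ifs
                · exact hhnn s
                · exact le_refl _
      _ = ∑ j : Fin ℓ, ∑ s ∈ (Finset.univ.erase (0 : Fin ℓ → F)),
            (if s j ≠ 0 then h s else 0) := Finset.sum_comm
      _ ≤ ∑ j : Fin ℓ, (q ^ ℓ) * ((∏ i ∈ Finset.univ.erase j, ((A i).card : ℝ)) * (q ^ d * B.card)) := by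
          refine Finset.sum_le_sum fun j _ => ?_
          calc ∑ s ∈ (Finset.univ.erase (0 : Fin ℓ → F)), (if s j ≠ 0 then h s else 0)
              ≤ ∑ s : Fin ℓ → F, (if s j ≠ 0 then h s else 0) := by
                refine Finset.sum_le_sum_of_subset_of_nonneg (Finset.subset_univ _) ?_
                intro s _ _
                split_ifs
                · exact hhnn s
                · exact le_refl 0
            _ ≤ ∑ s : Fin ℓ → F, ((∏ i ∈ Finset.univ.erase j, ((A i).card : ℝ)) * (q ^ d * B.card)) := by
                refine Finset.sum_le_sum fun s _ => ?_
                split_ifs with hsj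
                · exact herr j s hsj
                · exact mul_nonneg (Finset.prod_nonneg fun i _ => by positivity)
                    (by positivity)
            _ = (q ^ ℓ) * ((∏ i ∈ Finset.univ.erase j, ((A i).card : ℝ)) * (q ^ d * B.card)) := by
                rw [Finset.sum_const]
                have : (Finset.univ : Finset (Fin ℓ → F)).card = Fintype.card F ^ ℓ := by
                  simp [Fintype.card_fun]
                rw [this]
                push_cast [hq]
                ring
  -- assemble
  have hqlpos : (0:ℝ) < q ^ ℓ := pow_pos hqpos ℓ
  have hfinal : ∀ j : Fin ℓ, (∏ i ∈ Finset.univ.erase j, ((A i).card : ℝ))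
      = (∏ i, ((A i).card : ℝ)) * (1 / ((A j).card : ℝ)) := by
    intro j
    have hAj : ((A j).card : ℝ) ≠ 0 := by
      have := Finset.card_pos.mpr (hA j)
      positivity
    rw [← Finset.mul_prod_erase _ _ (Finset.mem_univ j)]
    rw [mul_comm ((A j).card : ℝ), mul_assoc, mul_one_div_cancel hAj, mul_one]
  calc (q ^ ℓ)⁻¹ * ∑ s : Fin ℓ → F, ∑ x ∈ Fintype.piFinset A, g (∑ i, s i • x i)
      = (q ^ ℓ)⁻¹ * ((∏ i, ((A i).card : ℝ)) * (B.card : ℝ) ^ 2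
          + ∑ s ∈ (Finset.univ.erase (0 : Fin ℓ → F)),
            ∑ x ∈ Fintype.piFinset A, g (∑ i, s i • x i)) := by
        rw [hsplit, hmain]
    _ ≤ (q ^ ℓ)⁻¹ * ((∏ i, ((A i).card : ℝ)) * (B.card : ℝ) ^ 2
          + ∑ j : Fin ℓ, (q ^ ℓ) * ((∏ i ∈ Finset.univ.erase j, ((A i).card : ℝ)) * (q ^ d * B.card))) := by
        apply mul_le_mul_of_nonneg_left _ (le_of_lt (inv_pos.mpr hqlpos))
        linarith [hcover]
    _ = (B.card : ℝ) ^ 2 * (∏ i, ((A i).card : ℝ)) / q ^ ℓ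
          + ∑ j : Fin ℓ, ((∏ i ∈ Finset.univ.erase j, ((A i).card : ℝ)) * (q ^ d * B.card)) := by
        rw [mul_add, Finset.mul_sum]
        congr 1
        · field_simp
        · refine Finset.sum_congr rfl fun j _ => ?_
          rw [← mul_assoc, inv_mul_cancel₀ hqlpos.ne', one_mul]
    _ = (B.card : ℝ) ^ 2 * (∏ i, ((A i).card : ℝ)) / q ^ ℓ
          + q ^ d * (B.card : ℝ) * (∏ i, ((A i).card : ℝ)) * ∑ j, 1 / ((A j).card : ℝ) := by
        congr 1
        rw [Finset.mul_sum]
        refine Finset.sum_congr rfl fun j _ => ?_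
        rw [hfinal j]
        ring
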